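/- In the counterclockwise control Lag system R_p, for any starting string (s₁,blank)...(s_{n-1},p)(sₙ,blank) with n ≥ 3 and any j with 1 ≤ j ≤ n−1, after j(n−1) iterations the control token p is located at position s_{n-1-j mod n} (indices cyclic), and all other control symbols are blank; i.e., the p token advances exactly one position counterclockwise per block of n−1 iterations. -/

import Mathlib

namespace Stmt17

/-- Control symbols: blank or the pulse token `p`. -/
inductive Ctl | blank | p
deriving DecidableEq

/-- The rule set `R_p`, acting on control coordinates:
`blank·blank → blank`, `blank·p → p`, `p·blank → blank`. -/
def rc : Ctl → Ctl → Option Ctl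
  | .blank, .blank => some .blank
  | .blank, .p => some .p
  | .p, .blank => some .blank
  | _, _ => none

/-- One Lag iteration with context length 2: match the control symbols of the
first two pairs, delete the first pair, append a pair with the first pair's
data symbol and the rule's output control symbol; halt (`none`) if no rule matches. -/
def step {α : Type*} (r : Ctl → Ctl → Option Ctl) :
    List (α × Ctl) → Option (List (α × Ctl))
  | (x, a) :: (y, b) :: rest => (r a b).map fun c => (y, b) :: rest ++ [(x, c)]
  | _ => none

/-- `k` iterations of the Lag system. -/
def iterL {α : Type*} (r : Ctl → Ctl → Option Ctl) :
    ℕ → List (α × Ctl) → Option (List (α × Ctl))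
  | 0, s => some s
  | k + 1, s => (step r s).bind (iterL r k)

end Stmt17

namespace Stmt17Aux
open Stmt17

variable {α : Type*}

lemma iterL_add (r : Ctl → Ctl → Option Ctl) (a b : ℕ) (s : List (α × Ctl)) :
    iterL r (a + b) s = (iterL r a s).bind (iterL r b) := by
  induction a generalizing s with
  | zero => simp [iterL]
  | succ a ih =>
    rw [show a + 1 + b = (a + b) + 1 by omega]
    show (step r s).bind (iterL r (a + b)) = ((step r s).bind (iterL r a)).bind (iterL r b)
    cases step r s with
    | none => rfl
    | some t => simp [ih]

lemma rot (B : List α) (z : α) (T : List (α × Ctl)) :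
    iterL rc B.length ((B.map fun a => (a, Ctl.blank)) ++ (z, Ctl.blank) :: T) =
      some ((z, Ctl.blank) :: (T ++ B.map fun a => (a, Ctl.blank))) := by
  induction B generalizing T with
  | nil => simp [iterL]
  | cons b B ih =>
    have h1 : step rc (((b :: B).map fun a => (a, Ctl.blank)) ++ (z, Ctl.blank) :: T)
        = some ((B.map fun a => (a, Ctl.blank)) ++ (z, Ctl.blank) :: (T ++ [(b, Ctl.blank)])) := by
      cases B with
      | nil => simp [step, rc]
      | cons b2 B' => simp [step, rc]
    show (step rc _).bind (iterL rc B.length) = _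
    rw [h1]
    simp [ih]

lemma block (B : List α) (z x y : α) :
    iterL rc (B.length + 2)
      ((B.map fun a => (a, Ctl.blank)) ++ [(z, Ctl.blank), (x, Ctl.p), (y, Ctl.blank)]) =
      some (((y :: B).map fun a => (a, Ctl.blank)) ++ [(z, Ctl.p), (x, Ctl.blank)]) := by
  rw [iterL_add]
  rw [show ([(z, Ctl.blank), (x, Ctl.p), (y, Ctl.blank)] : List (α × Ctl))
      = (z, Ctl.blank) :: [(x, Ctl.p), (y, Ctl.blank)] from rfl]
  rw [rot]
  simp [iterL, step, rc]

lemma d1 (m : ℕ) (D : Fin (m + 3) → α) :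
    (List.ofFn fun i : Fin (m + 3) => (D i, if i.val = m + 1 then Ctl.p else Ctl.blank)) =
      ((List.ofFn fun i : Fin m => D ⟨i.val, by omega⟩).map fun a => (a, Ctl.blank)) ++
        [(D ⟨m, by omega⟩, Ctl.blank), (D ⟨m + 1, by omega⟩, Ctl.p),
         (D ⟨m + 2, by omega⟩, Ctl.blank)] := by
  apply List.ext_getElem (by simp)
  intro i h1 h2
  have hi3 : i < m + 3 := by simp at h1; omega
  simp only [List.getElem_ofFn]
  by_cases hk : i < m
  · rw [List.getElem_append_left (by simp [hk])]
    simp only [List.getElem_map, List.getElem_ofFn]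
    simp [show ¬ i = m + 1 by omega]
  · rw [List.getElem_append_right (by simp; omega)]
    have hl : (List.map (fun a => (a, Ctl.blank))
        (List.ofFn fun i : Fin m => D ⟨i.val, by omega⟩)).length = m := by simp
    have : i = m ∨ i = m + 1 ∨ i = m + 2 := by omega
    rcases this with h | h | h
    · simp [hl, h, show ¬ m = m + 1 by omega]
    · simp [hl, h, Nat.add_sub_cancel_left]
    · simp [hl, h, show m + 2 - m = 2 by omega, show ¬ m + 2 = m + 1 by omega]

lemma d2 (m : ℕ) (D : Fin (m + 3) → α) :
    ((D ⟨m + 2, by omega⟩ :: List.ofFn fun i : Fin m => D ⟨i.val, by omega⟩).map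
        fun a => (a, Ctl.blank)) ++
      [(D ⟨m, by omega⟩, Ctl.p), (D ⟨m + 1, by omega⟩, Ctl.blank)] =
    List.ofFn fun i : Fin (m + 3) =>
      (D ⟨(i.val + (m + 2)) % (m + 3), Nat.mod_lt _ (by omega)⟩,
        if i.val = m + 1 then Ctl.p else Ctl.blank) := by
  apply List.ext_getElem (by simp)
  intro i h1 h2
  have hi3 : i < m + 3 := by simp at h2; omega
  simp only [List.getElem_ofFn, List.map_cons, List.cons_append, List.getElem_cons]
  rcases Nat.eq_zero_or_pos i with rfl | hpos
  · have e : (0 + (m + 2)) % (m + 3) = m + 2 := by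
      rw [Nat.zero_add, Nat.mod_eq_of_lt (by omega)]
    simp [e, show ¬ (0 : ℕ) = m + 1 by omega]
  · obtain ⟨k, rfl⟩ : ∃ k, i = k + 1 := ⟨i - 1, by omega⟩
    simp only [show ¬ k + 1 = 0 by omega, dite_false, Nat.add_sub_cancel]
    by_cases hk : k < m
    · rw [List.getElem_append_left (by simp [hk])]
      have e : (k + 1 + (m + 2)) % (m + 3) = k := by
        rw [show k + 1 + (m + 2) = k + (m + 3) by omega, Nat.add_mod_right,
          Nat.mod_eq_of_lt (by omega)]
      simp only [List.getElem_map, List.getElem_ofFn, e]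
      simp [show ¬ k + 1 = m + 1 by omega, show ¬ k = m by omega]
    · rw [List.getElem_append_right (by simp; omega)]
      have hl : (List.map (fun a => (a, Ctl.blank))
          (List.ofFn fun i : Fin m => D ⟨i.val, by omega⟩)).length = m := by simp
      have : k = m ∨ k = m + 1 := by omega
      rcases this with h | h
      · subst h
        have e : (k + 1 + (k + 2)) % (k + 3) = k := by
          rw [show k + 1 + (k + 2) = k + (k + 3) by omega, Nat.add_mod_right,
            Nat.mod_eq_of_lt (by omega)]
        simp [hl, e]
      · subst h
        have e : (m + 1 + 1 + (m + 2)) % (m + 3) = m + 1 := by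
          rw [show m + 1 + 1 + (m + 2) = m + 1 + (m + 3) by omega, Nat.add_mod_right,
            Nat.mod_eq_of_lt (by omega)]
        simp [hl, e, show m + 1 - m = 1 by omega, show ¬ m + 1 + 1 = m + 1 by omega]

lemma blockOfFn (m : ℕ) (D : Fin (m + 3) → α) :
    iterL rc (m + 2)
      (List.ofFn fun i : Fin (m + 3) => (D i, if i.val = m + 1 then Ctl.p else Ctl.blank)) =
    some (List.ofFn fun i : Fin (m + 3) =>
      (D ⟨(i.val + (m + 2)) % (m + 3), Nat.mod_lt _ (by omega)⟩,
        if i.val = m + 1 then Ctl.p else Ctl.blank)) := by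
  rw [d1, ← d2]
  have hb : (List.ofFn fun i : Fin m => D ⟨i.val, by omega⟩).length = m := by simp
  have hB := block (List.ofFn fun i : Fin m => D ⟨i.val, by omega⟩)
    (D ⟨m, by omega⟩) (D ⟨m + 1, by omega⟩) (D ⟨m + 2, by omega⟩)
  rw [hb] at hB
  exact hB

lemma key (m : ℕ) (s : Fin (m + 3) → α) :
    ∀ j, j ≤ m + 2 →
      iterL rc (j * (m + 2))
        (List.ofFn fun i : Fin (m + 3) => (s i, if i.val = m + 1 then Ctl.p else Ctl.blank)) =
      some (List.ofFn fun i : Fin (m + 3) =>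
        (s ⟨(i.val + (m + 3 - j)) % (m + 3), Nat.mod_lt _ (by omega)⟩,
          if i.val = m + 1 then Ctl.p else Ctl.blank)) := by
  intro j
  induction j with
  | zero =>
    intro _
    simp only [Nat.zero_mul, iterL]
    congr 1
    refine List.ofFn_inj.mpr (funext fun i => ?_)
    simp [Nat.sub_zero, Nat.add_mod_right, Nat.mod_eq_of_lt i.isLt]
  | succ j ih =>
    intro hj
    have ihj := ih (by omega)
    rw [show (j + 1) * (m + 2) = j * (m + 2) + (m + 2) by ring]
    rw [iterL_add, ihj, Option.bind_some]
    refine (blockOfFn m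
      (fun i => s ⟨(i.val + (m + 3 - j)) % (m + 3), Nat.mod_lt _ (by omega)⟩)).trans ?_
    congr 1
    refine List.ofFn_inj.mpr (funext fun i => ?_)
    have e : ((i.val + (m + 2)) % (m + 3) + (m + 3 - j)) % (m + 3)
        = (i.val + (m + 3 - (j + 1))) % (m + 3) := by
      rw [Nat.mod_add_mod,
        show i.val + (m + 2) + (m + 3 - j) = i.val + (m + 3 - (j + 1)) + (m + 3) by omega,
        Nat.add_mod_right]
    simp [e]

end Stmt17Aux

open Stmt17 in
/-- In the Lag system `R_p`, starting from
`(s₁,blank)...(s_{n-2},blank)(s_{n-1},p)(sₙ,blank)` with `n ≥ 3`: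
for any `1 ≤ j ≤ n−1`, after `j(n−1)` iterations the memory string is the
`j`-fold counterclockwise data rotation with the single control token `p`
attached to the data symbol `s_{n-1-j}` (indices cyclic, i.e. at position
`(n−2)+(n−j) mod n` of the original string) and all other control symbols
blank: the `p` token advances exactly one position counterclockwise per block
of `n−1` iterations. -/
theorem stmt17 {α : Type*} (n : ℕ) (hn : 3 ≤ n) (s : Fin n → α)
    (j : ℕ) (hj1 : 1 ≤ j) (hj2 : j ≤ n - 1) :
    iterL rc (j * (n - 1))
      (List.ofFn fun i : Fin n => (s i, if i.val = n - 2 then Ctl.p else Ctl.blank)) =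
    some (List.ofFn fun i : Fin n =>
      (s ⟨(i.val + (n - j)) % n, Nat.mod_lt _ (by omega)⟩,
        if i.val = n - 2 then Ctl.p else Ctl.blank)) := by
  obtain ⟨m, rfl⟩ : ∃ m, n = m + 3 := ⟨n - 3, by omega⟩
  simp only [show m + 3 - 1 = m + 2 by omega, show m + 3 - 2 = m + 1 by omega]
  exact Stmt17Aux.key m s j (by omega)
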